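/- Let G be an n-vertex graph with no induced matching of size 2 (i.e., G contains no four distinct vertices a, b, c, d such that ab and cd are edges and there are no other edges among {a,b,c,d}). Then the number of maximal independent sets of G is at most n^2. -/

import Mathlib

/-- A finset of vertices is independent: no two of its members are adjacent. -/
def IsIndepSet {V : Type*} (G : SimpleGraph V) (s : Finset V) : Prop :=
  ∀ a ∈ s, ∀ b ∈ s, ¬ G.Adj a b

/-- A maximum independent set: independent and of largest possible cardinality. -/
def IsMaxIndepSet {V : Type*} (G : SimpleGraph V) (s : Finset V) : Prop :=
  IsIndepSet G s ∧ ∀ t : Finset V, IsIndepSet G t → t.card ≤ s.card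
/-- G contains no induced matching of size 2 (no induced 2K₂). -/
def InducedM2Free {V : Type*} (G : SimpleGraph V) : Prop :=
  ¬ ∃ a b c d : V, a ≠ b ∧ a ≠ c ∧ a ≠ d ∧ b ≠ c ∧ b ≠ d ∧ c ≠ d ∧
      G.Adj a b ∧ G.Adj c d ∧ ¬ G.Adj a c ∧ ¬ G.Adj a d ∧ ¬ G.Adj b c ∧ ¬ G.Adj b d

/-- A maximal independent set: independent and not properly contained in another. -/
def IsMaximalIndepSet {V : Type*} (G : SimpleGraph V) (s : Finset V) : Prop :=
  IsIndepSet G s ∧ ∀ t : Finset V, IsIndepSet G t → s ⊆ t → t = s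

section Aux

variable {V : Type*} [Fintype V] [DecidableEq V] (G : SimpleGraph V)

/-- `s` is a maximal independent subset of `A`. -/
def MaxIn (A s : Finset V) : Prop :=
  s ⊆ A ∧ IsIndepSet G s ∧ ∀ t : Finset V, t ⊆ A → IsIndepSet G t → s ⊆ t → t = s

/-- The collection of maximal independent subsets of `A`. -/
noncomputable def mP (A : Finset V) : Finset (Finset V) :=
  @Finset.filter _ (fun s => MaxIn G A s) (Classical.decPred _) A.powerset

lemma mem_mP {A s : Finset V} : s ∈ mP G A ↔ MaxIn G A s := by
  classical
  constructor
  · intro h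
    exact (Finset.mem_filter.mp h).2
  · intro h
    exact Finset.mem_filter.mpr ⟨Finset.mem_powerset.mpr h.1, h⟩

variable {G}

lemma indep_mono {s t : Finset V} (h : t ⊆ s) (hs : IsIndepSet G s) : IsIndepSet G t :=
  fun a ha b hb => hs a (h ha) b (h hb)

lemma step (hG : InducedM2Free G) (A : Finset V) (v : V) (hv : v ∈ A) :
    (mP G A).card ≤ (mP G (A.erase v)).card + (A.erase v).card := by
  classical
  set A' := A.erase v with hA'
  set cond : Finset V → Prop := fun s => v ∉ s ∨ MaxIn G A' (s.erase v) with hcond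
  have hsplit : ((mP G A).filter cond).card + ((mP G A).filter (fun s => ¬ cond s)).card
      = (mP G A).card := Finset.card_filter_add_card_filter_not _
  have h1 : ((mP G A).filter cond).card ≤ (mP G A').card := by
    apply Finset.card_le_card_of_injOn (fun s => s.erase v)
    · intro s hs
      rcases Finset.mem_filter.mp hs with ⟨hsP, hc⟩
      rcases (mem_mP G).mp hsP with ⟨hsA, hsI, hsM⟩
      rcases hc with hvn | hmax
      · show s.erase v ∈ mP G A'
        rw [Finset.erase_eq_of_notMem hvn]
        refine (mem_mP G).mpr ⟨Finset.subset_erase.mpr ⟨hsA, hvn⟩, hsI, ?_⟩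
        intro t htA htI hst
        exact hsM t (htA.trans (Finset.erase_subset _ _)) htI hst
      · exact (mem_mP G).mpr hmax
    · intro s₁ h₁ s₂ h₂ heq
      simp only [Finset.mem_coe] at h₁ h₂
      replace heq : s₁.erase v = s₂.erase v := heq
      rcases Finset.mem_filter.mp h₁ with ⟨h₁P, _⟩
      rcases Finset.mem_filter.mp h₂ with ⟨h₂P, _⟩
      rcases (mem_mP G).mp h₁P with ⟨h₁A, h₁I, h₁M⟩
      rcases (mem_mP G).mp h₂P with ⟨h₂A, h₂I, h₂M⟩
      by_cases hv1 : v ∈ s₁ <;> by_cases hv2 : v ∈ s₂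
      · rw [← Finset.insert_erase hv1, ← Finset.insert_erase hv2, heq]
      · exfalso
        rw [Finset.erase_eq_of_notMem hv2] at heq
        have hsub : s₂ ⊆ s₁ := heq ▸ Finset.erase_subset _ _
        have := h₂M s₁ h₁A h₁I hsub
        exact hv2 (this ▸ hv1)
      · exfalso
        rw [Finset.erase_eq_of_notMem hv1] at heq
        have hsub : s₁ ⊆ s₂ := heq.symm ▸ Finset.erase_subset _ _
        have := h₁M s₂ h₂A h₂I hsub
        exact hv1 (this ▸ hv2)
      · rw [Finset.erase_eq_of_notMem hv1, Finset.erase_eq_of_notMem hv2] at heq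
        exact heq
  have h2 : ((mP G A).filter (fun s => ¬ cond s)).card ≤ A'.card := by
    have hsub : ((mP G A).filter (fun s => ¬ cond s)) ⊆
        A'.image (fun u => insert v (A.filter (fun w => ¬ G.Adj w u ∧ ¬ G.Adj w v))) := by
      intro s hs
      rcases Finset.mem_filter.mp hs with ⟨hsP, hc⟩
      rcases (mem_mP G).mp hsP with ⟨hsA, hsI, hsM⟩
      have hvs : v ∈ s := by
        by_contra h
        exact hc (Or.inl h)
      have hnmax : ¬ MaxIn G A' (s.erase v) := fun h => hc (Or.inr h)
      have hseA : s.erase v ⊆ A' := Finset.erase_subset_erase v hsA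
      have hseI : IsIndepSet G (s.erase v) := indep_mono (Finset.erase_subset _ _) hsI
      have hex : ∃ t : Finset V, t ⊆ A' ∧ IsIndepSet G t ∧ s.erase v ⊆ t ∧ t ≠ s.erase v := by
        by_contra h
        push_neg at h
        exact hnmax ⟨hseA, hseI, fun t ht hti hst => h t ht hti hst⟩
      obtain ⟨t, htA, htI, hst, htne⟩ := hex
      obtain ⟨u, hut, hus⟩ : ∃ u, u ∈ t ∧ u ∉ s.erase v := by
        by_contra h
        push_neg at h
        exact htne (Finset.Subset.antisymm h hst)
      have huA' : u ∈ A' := htA hut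
      have hune : u ≠ v := Finset.ne_of_mem_erase huA'
      have husS : u ∉ s := fun h => hus (Finset.mem_erase.mpr ⟨hune, h⟩)
      have hins : insert u s ⊆ A := Finset.insert_subset (Finset.mem_of_mem_erase huA') hsA
      have hnotI : ¬ IsIndepSet G (insert u s) := by
        intro hI
        have := hsM _ hins hI (Finset.subset_insert _ _)
        exact husS (this ▸ Finset.mem_insert_self u s)
      obtain ⟨a, ha, b, hb, hab⟩ : ∃ a ∈ insert u s, ∃ b ∈ insert u s, G.Adj a b := by
        by_contra h
        push_neg at h
        exact hnotI h
      have key : ∀ w ∈ s, G.Adj u w → G.Adj u v := by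
        intro w hw hadj
        by_cases hwv : w = v
        · exact hwv ▸ hadj
        · have hwt : w ∈ t := hst (Finset.mem_erase.mpr ⟨hwv, hw⟩)
          exact absurd hadj (htI u hut w hwt)
      have huv : G.Adj u v := by
        rcases Finset.mem_insert.mp ha with rfl | ha' <;>
          rcases Finset.mem_insert.mp hb with rfl | hb'
        · exact absurd hab (G.irrefl)
        · exact key b hb' hab
        · exact key a ha' hab.symm
        · exact absurd hab (hsI a ha' b hb')
      set C : Finset V := A.filter (fun w => ¬ G.Adj w u ∧ ¬ G.Adj w v) with hC
      have hsC : s ⊆ insert v C := by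
        intro x hx
        by_cases hxv : x = v
        · exact hxv ▸ Finset.mem_insert_self _ _
        · apply Finset.mem_insert_of_mem
          refine Finset.mem_filter.mpr ⟨hsA hx, ?_, ?_⟩
          · have hxt : x ∈ t := hst (Finset.mem_erase.mpr ⟨hxv, hx⟩)
            exact fun h => htI x hxt u hut h
          · exact hsI x hx v hvs
      have hCI : IsIndepSet G (insert v C) := by
        intro a ha b hb hab
        rcases Finset.mem_insert.mp ha with rfl | haC <;>
          rcases Finset.mem_insert.mp hb with rfl | hbC
        · exact G.irrefl hab
        · exact (Finset.mem_filter.mp hbC).2.2 hab.symm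
        · exact (Finset.mem_filter.mp haC).2.2 hab
        · obtain ⟨haA, hau, hav⟩ := Finset.mem_filter.mp haC
          obtain ⟨hbA, hbu, hbv⟩ := Finset.mem_filter.mp hbC
          exact hG ⟨u, v, a, b, huv.ne, (fun h => hav (h ▸ huv)),
            (fun h => hbv (h ▸ huv)), (fun h => hau (h ▸ huv.symm)),
            (fun h => hbu (h ▸ huv.symm)), hab.ne, huv, hab,
            (fun h => hau h.symm), (fun h => hbu h.symm),
            (fun h => hav h.symm), (fun h => hbv h.symm)⟩
      have hCA : insert v C ⊆ A := Finset.insert_subset hv (Finset.filter_subset _ _)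
      exact Finset.mem_image.mpr ⟨u, huA', hsM _ hCA hCI hsC⟩
    calc ((mP G A).filter (fun s => ¬ cond s)).card
        ≤ (A'.image (fun u => insert v (A.filter (fun w => ¬ G.Adj w u ∧ ¬ G.Adj w v)))).card :=
          Finset.card_le_card hsub
      _ ≤ A'.card := Finset.card_image_le
  omega

lemma mP_empty : mP G (∅ : Finset V) = {∅} := by
  ext s
  rw [mem_mP, Finset.mem_singleton]
  constructor
  · intro h
    exact Finset.subset_empty.mp h.1
  · rintro rfl
    exact ⟨Finset.Subset.refl _, fun a ha => absurd ha (Finset.notMem_empty a),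
      fun t ht _ _ => Finset.subset_empty.mp ht⟩

lemma key_bound (hG : InducedM2Free G) (A : Finset V) :
    2 * (mP G A).card ≤ 2 + A.card * (A.card - 1) := by
  classical
  induction A using Finset.strongInduction with
  | _ A ih =>
    rcases A.eq_empty_or_nonempty with rfl | ⟨v, hv⟩
    · rw [mP_empty]
      simp
    · have hss : A.erase v ⊂ A := Finset.erase_ssubset hv
      have h1 := ih (A.erase v) hss
      have h2 := step hG A v hv
      have hcard : (A.erase v).card = A.card - 1 := Finset.card_erase_of_mem hv
      have hA1 : 1 ≤ A.card := Finset.card_pos.mpr ⟨v, hv⟩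
      rw [hcard] at h1 h2
      -- 2 * mP A ≤ 2 * mP A' + 2*(n-1) ≤ 2 + (n-1)*(n-2) + 2*(n-1) = 2 + (n-1)*n
      have : (A.card - 1) * (A.card - 1 - 1) + 2 * (A.card - 1) = A.card * (A.card - 1) := by
        rcases Nat.exists_eq_add_of_le hA1 with ⟨m, hm⟩
        have hm' : A.card - 1 = m := by omega
        rw [hm', hm]
        cases m with
        | zero => simp
        | succ k =>
          simp only [Nat.succ_sub_one]
          ring
      omega

end Aux

/-- A graph on n ≥ 1 vertices with no induced matching of size 2 has at most n²
maximal independent sets. -/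
theorem stmt_12 {V : Type*} [Fintype V] [DecidableEq V] [Nonempty V] (G : SimpleGraph V)
    (hG : InducedM2Free G) :
    {s : Finset V | IsMaximalIndepSet G s}.ncard ≤ (Fintype.card V) ^ 2 := by
  classical
  have hset : {s : Finset V | IsMaximalIndepSet G s} = ↑(mP G Finset.univ) := by
    ext s
    simp only [Set.mem_setOf_eq, Finset.coe_sort_coe, Finset.mem_coe, mem_mP]
    constructor
    · intro h
      exact ⟨Finset.subset_univ s, h.1, fun t _ hti hst => h.2 t hti hst⟩
    · intro h
      exact ⟨h.2.1, fun t hti hst => h.2.2 t (Finset.subset_univ t) hti hst⟩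
  rw [hset, Set.ncard_coe_finset]
  have hk := key_bound hG (Finset.univ : Finset V)
  rw [Finset.card_univ] at hk
  set n := Fintype.card V with hn
  have hn1 : 1 ≤ n := Fintype.card_pos
  rcases Nat.exists_eq_add_of_le hn1 with ⟨m, hm⟩
  rw [hm] at hk ⊢
  simp only [Nat.add_sub_cancel_left] at hk
  nlinarith [hk]
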